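/- Suppose μ, σ, η are real with σ > 0 and η < 0, and let x > 1 be the real root of x³ + 3x² − 4 − η² = 0. Define s = √(ln x), m = (1/2)·ln(σ²/(x(x−1))), τ = −μ − σ/√(x−1). Then for N ~ N(0,1), the random variable W = −(e^{sN+m} + τ) satisfies E[W] = μ, Var(W) = σ², and E[(W − μ)³]/σ³ = η. -/

import Mathlib

open MeasureTheory ProbabilityTheory Real
open scoped ENNReal NNReal

lemma gauss_exp_int (c : ℝ) :
    Integrable (fun t => rexp (c * t)) (gaussianReal 0 1) ∧
    (∫ t, rexp (c * t) ∂(gaussianReal 0 1)) = rexp (c ^ 2 / 2) := by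
  have hpdf : ∀ t : ℝ, gaussianPDFReal 0 1 t * rexp (c * t)
      = rexp (c ^ 2 / 2) * gaussianPDFReal c 1 t := by
    intro t
    simp only [gaussianPDFReal, NNReal.coe_one, mul_one, sub_zero]
    rw [mul_assoc, ← Real.exp_add, mul_comm (rexp (c ^ 2 / 2)), mul_assoc, ← Real.exp_add]
    congr 1
    ring
  have hf : Measurable fun t : ℝ => (gaussianPDFReal 0 1 t).toNNReal :=
    (measurable_gaussianPDFReal 0 1).real_toNNReal
  have hmeas : gaussianReal 0 1
      = volume.withDensity (fun t => ((gaussianPDFReal 0 1 t).toNNReal : ℝ≥0∞)) := by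
    rw [gaussianReal_of_var_ne_zero _ one_ne_zero]; rfl
  have hsmul : ∀ t : ℝ, (gaussianPDFReal 0 1 t).toNNReal • rexp (c * t)
      = rexp (c ^ 2 / 2) * gaussianPDFReal c 1 t := by
    intro t
    rw [NNReal.smul_def, smul_eq_mul, Real.coe_toNNReal _ (gaussianPDFReal_nonneg 0 1 t), hpdf t]
  constructor
  · rw [hmeas, integrable_withDensity_iff_integrable_smul hf]
    have : (fun t => (gaussianPDFReal 0 1 t).toNNReal • rexp (c * t))
        = fun t => rexp (c ^ 2 / 2) * gaussianPDFReal c 1 t := funext hsmul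
    rw [this]
    exact (integrable_gaussianPDFReal c 1).const_mul _
  · rw [hmeas, integral_withDensity_eq_integral_smul hf]
    simp_rw [hsmul]
    rw [integral_const_mul, integral_gaussianPDFReal_eq_one c one_ne_zero, mul_one]

theorem moment_match_neg_skew
    {Ω : Type*} [MeasurableSpace Ω] (P : Measure Ω) [IsProbabilityMeasure P]
    (N : Ω → ℝ) (hNmeas : Measurable N)
    (hN : Measure.map N P = gaussianReal 0 1)
    (μ σ η x : ℝ) (hσ : 0 < σ) (hη : η < 0)
    (hx1 : 1 < x) (hroot : x ^ 3 + 3 * x ^ 2 - 4 - η ^ 2 = 0)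
    (s m τ : ℝ)
    (hs : s = Real.sqrt (Real.log x))
    (hm : m = (1 / 2) * Real.log (σ ^ 2 / (x * (x - 1))))
    (hτ : τ = -μ - σ / Real.sqrt (x - 1)) :
    (∫ ω, -(Real.exp (s * N ω + m) + τ) ∂P) = μ ∧
    (∫ ω, (-(Real.exp (s * N ω + m) + τ) - μ) ^ 2 ∂P) = σ ^ 2 ∧
    (∫ ω, (-(Real.exp (s * N ω + m) + τ) - μ) ^ 3 ∂P) / σ ^ 3 = η := by
  have hx0 : (0:ℝ) < x := by linarith
  have hxm1 : (0:ℝ) < x - 1 := by linarith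
  set a := Real.sqrt (x - 1) with ha_def
  have ha : 0 < a := Real.sqrt_pos.mpr hxm1
  have ha2 : a ^ 2 = x - 1 := Real.sq_sqrt hxm1.le
  have hxa : x = a ^ 2 + 1 := by linarith
  -- base integral facts over P
  have base : ∀ c : ℝ, Integrable (fun ω => rexp (c * N ω)) P ∧
      (∫ ω, rexp (c * N ω) ∂P) = rexp (c ^ 2 / 2) := by
    intro c
    have hmeasf : AEStronglyMeasurable (fun t : ℝ => rexp (c * t)) (Measure.map N P) :=
      (Real.continuous_exp.comp (continuous_const.mul continuous_id)).aestronglyMeasurable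
    constructor
    · have h2 : Integrable (fun t : ℝ => rexp (c * t)) (Measure.map N P) := by
        rw [hN]; exact (gauss_exp_int c).1
      exact (integrable_map_measure hmeasf hNmeas.aemeasurable).mp h2
    · have h := integral_map hNmeas.aemeasurable hmeasf
      rw [hN, (gauss_exp_int c).2] at h
      exact h.symm
  -- exponent bookkeeping
  have hs2 : s ^ 2 = Real.log x := by
    rw [hs]; exact Real.sq_sqrt (Real.log_nonneg hx1.le)
  set u := rexp m with hu_def
  set v := rexp (s ^ 2 / 2) with hv_def
  have hu0 : 0 < u := Real.exp_pos m
  have hv0 : 0 < v := Real.exp_pos _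
  have hv2 : v ^ 2 = x := by
    rw [hv_def, sq, ← Real.exp_add, show s ^ 2 / 2 + s ^ 2 / 2 = s ^ 2 by ring, hs2,
      Real.exp_log hx0]
  have hu2 : u ^ 2 * (x * (x - 1)) = σ ^ 2 := by
    have hpos : 0 < σ ^ 2 / (x * (x - 1)) := by positivity
    have : u ^ 2 = σ ^ 2 / (x * (x - 1)) := by
      rw [hu_def, sq, ← Real.exp_add, show m + m = 2 * m by ring, hm,
        show 2 * ((1/2) * Real.log (σ ^ 2 / (x * (x - 1)))) = Real.log (σ ^ 2 / (x * (x - 1)))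
          by ring, Real.exp_log hpos]
    rw [this]; field_simp
  have e2m : rexp (2 * m) = u ^ 2 := by
    rw [hu_def, sq, ← Real.exp_add]; congr 1; ring
  have e3m : rexp (3 * m) = u ^ 3 := by
    rw [hu_def, pow_succ, sq, ← Real.exp_add, ← Real.exp_add]; congr 1; ring
  clear_value a u v
  have e2s : rexp ((2 * s) ^ 2 / 2) = x ^ 2 := by
    have h4 : (2 * s) ^ 2 / 2 = (s^2/2) + (s^2/2) + ((s^2/2) + (s^2/2)) := by ring
    rw [h4]
    simp only [Real.exp_add]
    rw [← hv_def, show v * v * (v * v) = (v ^ 2) ^ 2 by ring, hv2]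
  have e3s : rexp ((3 * s) ^ 2 / 2) = x ^ 4 * v := by
    have h9 : (3 * s) ^ 2 / 2 = (s^2/2) + (s^2/2) + ((s^2/2) + (s^2/2))
        + ((s^2/2) + (s^2/2) + ((s^2/2) + (s^2/2))) + (s^2/2) := by ring
    rw [h9]
    simp only [Real.exp_add]
    rw [← hv_def, show v * v * (v * v) * (v * v * (v * v)) * v = ((v ^ 2) ^ 2) ^ 2 * v by ring,
      hv2]
    ring
  -- values of the three lognormal moments
  have hE1 : u * v = σ / a := by
    have h1 : (u * v) ^ 2 = (σ / a) ^ 2 := by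
      rw [mul_pow, hv2, div_pow, ha2, eq_div_iff (by linarith)]
      linear_combination hu2
    calc u * v = Real.sqrt ((u * v) ^ 2) := (Real.sqrt_sq (by positivity)).symm
      _ = Real.sqrt ((σ / a) ^ 2) := by rw [h1]
      _ = σ / a := Real.sqrt_sq (by positivity)
  have hE2 : u ^ 2 * x ^ 2 = σ ^ 2 * x / (x - 1) := by
    rw [eq_div_iff (by linarith)]
    linear_combination x * hu2
  have hE3 : u ^ 3 * (x ^ 4 * v) = σ ^ 3 * x ^ 3 / ((x - 1) * a) := by
    have : u ^ 3 * (x ^ 4 * v) = (u ^ 2 * (x * (x - 1))) * (x ^ 3 / (x - 1)) * (u * v) := by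
      field_simp
    rw [this, hu2, hE1]
    field_simp
  -- A = τ + μ
  have hτμ : τ + μ = -(σ / a) := by rw [hτ]; ring
  -- Mean
  have I1 : Integrable (fun ω => rexp (s * N ω + m)) P := by
    simp_rw [Real.exp_add]
    exact (base s).1.mul_const _
  have J1 : (∫ ω, rexp (s * N ω + m) ∂P) = u * v := by
    simp_rw [Real.exp_add]
    rw [integral_mul_const, (base s).2, ← hu_def, ← hv_def, mul_comm]
  have hmean : (∫ ω, -(rexp (s * N ω + m) + τ) ∂P) = μ := by
    rw [integral_neg, integral_add I1 (integrable_const τ), J1, integral_const,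
      probReal_univ, one_smul, hE1, hτ]
    ring
  refine ⟨hmean, ?_, ?_⟩
  -- Variance
  · have Ia : Integrable (fun ω => u ^ 2 * rexp ((2 * s) * N ω)) P := (base (2 * s)).1.const_mul _
    have Ib : Integrable (fun ω => (2 * (τ + μ) * u) * rexp (s * N ω)) P :=
      (base s).1.const_mul _
    have hexp : ∀ ω, (-(rexp (s * N ω + m) + τ) - μ) ^ 2
        = u ^ 2 * rexp ((2 * s) * N ω) + (2 * (τ + μ) * u) * rexp (s * N ω) + (τ + μ) ^ 2 := by
      intro ω
      have e2 : u ^ 2 * rexp ((2 * s) * N ω) = rexp (s * N ω + m) ^ 2 := by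
        rw [hu_def, sq (rexp m), mul_assoc, ← Real.exp_add, ← Real.exp_add, sq, ← Real.exp_add]
        congr 1; ring
      have e1 : u * rexp (s * N ω) = rexp (s * N ω + m) := by
        rw [hu_def, ← Real.exp_add]; congr 1; ring
      rw [show (2 * (τ + μ) * u) * rexp (s * N ω) = 2 * (τ + μ) * (u * rexp (s * N ω)) by ring,
        e1, e2]
      ring
    have Iab : Integrable (fun ω => u ^ 2 * rexp ((2 * s) * N ω)
        + (2 * (τ + μ) * u) * rexp (s * N ω)) P := Ia.add Ib
    simp_rw [hexp]
    rw [integral_add Iab (integrable_const _), integral_add Ia Ib,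
      integral_const_mul, integral_const_mul, (base (2 * s)).2, (base s).2, integral_const,
      probReal_univ, one_smul, e2s, ← hv_def, hτμ]
    rw [show u ^ 2 * x ^ 2 + 2 * -(σ / a) * u * v + (-(σ / a)) ^ 2
        = u ^ 2 * x ^ 2 + 2 * -(σ / a) * (u * v) + (σ / a) ^ 2 by ring, hE1, hE2, hxa]
    field_simp
    ring
  -- Skewness
  · have hηval : η = -(a * (x + 2)) := by
      have hK : 0 < a * (x + 2) := mul_pos ha (by linarith)
      have hsqK : (η + a * (x + 2)) * (η - a * (x + 2)) = 0 := by
        have h1 : η ^ 2 = (x - 1) * (x + 2) ^ 2 := by linear_combination -hroot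
        have h2 : (a * (x + 2)) ^ 2 = (x - 1) * (x + 2) ^ 2 := by rw [mul_pow, ha2]
        linear_combination h1 - h2
      rcases mul_eq_zero.mp hsqK with h | h
      · linarith
      · linarith
    have Ia : Integrable (fun ω => -(u ^ 3) * rexp ((3 * s) * N ω)) P :=
      (base (3 * s)).1.const_mul _
    have Ib : Integrable (fun ω => (-(3 * (τ + μ)) * u ^ 2) * rexp ((2 * s) * N ω)) P :=
      (base (2 * s)).1.const_mul _
    have Ic : Integrable (fun ω => (-(3 * (τ + μ) ^ 2) * u) * rexp (s * N ω)) P :=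
      (base s).1.const_mul _
    have hexp : ∀ ω, (-(rexp (s * N ω + m) + τ) - μ) ^ 3
        = -(u ^ 3) * rexp ((3 * s) * N ω) + (-(3 * (τ + μ)) * u ^ 2) * rexp ((2 * s) * N ω)
          + (-(3 * (τ + μ) ^ 2) * u) * rexp (s * N ω) + (-((τ + μ) ^ 3)) := by
      intro ω
      have e1 : u * rexp (s * N ω) = rexp (s * N ω + m) := by
        rw [hu_def, ← Real.exp_add]; congr 1; ring
      have e2 : u ^ 2 * rexp ((2 * s) * N ω) = rexp (s * N ω + m) ^ 2 := by
        rw [hu_def, sq (rexp m), mul_assoc, ← Real.exp_add, ← Real.exp_add, sq, ← Real.exp_add]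
        congr 1; ring
      have e3 : u ^ 3 * rexp ((3 * s) * N ω) = rexp (s * N ω + m) ^ 3 := by
        rw [hu_def, pow_succ, sq (rexp m), mul_assoc, mul_assoc, ← Real.exp_add, ← Real.exp_add,
          ← Real.exp_add, pow_succ, sq, ← Real.exp_add, ← Real.exp_add]
        congr 1; ring
      rw [show -(u ^ 3) * rexp ((3 * s) * N ω) = -(u ^ 3 * rexp ((3 * s) * N ω)) by ring, e3,
        show (-(3 * (τ + μ)) * u ^ 2) * rexp ((2 * s) * N ω)
          = -(3 * (τ + μ)) * (u ^ 2 * rexp ((2 * s) * N ω)) by ring, e2,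
        show (-(3 * (τ + μ) ^ 2) * u) * rexp (s * N ω)
          = -(3 * (τ + μ) ^ 2) * (u * rexp (s * N ω)) by ring, e1]
      ring
    have Iab : Integrable (fun ω => -(u ^ 3) * rexp ((3 * s) * N ω)
        + (-(3 * (τ + μ)) * u ^ 2) * rexp ((2 * s) * N ω)) P := Ia.add Ib
    have Iabc : Integrable (fun ω => -(u ^ 3) * rexp ((3 * s) * N ω)
        + (-(3 * (τ + μ)) * u ^ 2) * rexp ((2 * s) * N ω)
        + (-(3 * (τ + μ) ^ 2) * u) * rexp (s * N ω)) P := Iab.add Ic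
    simp_rw [hexp]
    rw [integral_add Iabc (integrable_const _), integral_add Iab Ic,
      integral_add Ia Ib, integral_const_mul, integral_const_mul, integral_const_mul,
      (base (3 * s)).2, (base (2 * s)).2, (base s).2, integral_const, probReal_univ,
      one_smul, e3s, e2s, ← hv_def, hτμ]
    have key : -(u ^ 3) * (x ^ 4 * v) + -(3 * -(σ / a)) * u ^ 2 * x ^ 2
        + -(3 * (-(σ / a)) ^ 2) * u * v + -((-(σ / a)) ^ 3) = η * σ ^ 3 := by
      have t3 : -(u ^ 3) * (x ^ 4 * v) = -(σ ^ 3 * x ^ 3 / ((x - 1) * a)) := by rw [← hE3]; ring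
      have t2 : -(3 * -(σ / a)) * u ^ 2 * x ^ 2 = 3 * (σ / a) * (σ ^ 2 * x / (x - 1)) := by
        rw [← hE2]; ring
      have t1 : -(3 * (-(σ / a)) ^ 2) * u * v = -(3 * (σ / a) ^ 2) * (σ / a) := by
        rw [show -(3 * (-(σ / a)) ^ 2) * u * v = -(3 * (σ / a) ^ 2) * (u * v) by ring, hE1]
      rw [t3, t2, t1, hηval, hxa]
      field_simp
      ring
    rw [key]
    field_simp
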